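/- Let (H, μ_H, Δ_H) be a bialgebra, (C, Δ_C) an H-comodule coalgebra via δ : C → H ⊗ C, and α_C : C → C a coalgebra endomorphism that is also H-colinear (i.e., δ ∘ α_C = (id_H ⊗ α_C) ∘ δ). Then δ_α = (id_H ⊗ α_C) ∘ δ gives the Hom-coassociative coalgebra C_α = (C, Δ_C ∘ α_C, α_C) the structure of an H-comodule Hom-coalgebra, where H is viewed as the Hom-bialgebra (H, μ_H, Δ_H, id_H). -/
import Mathlib


open TensorProduct

/-- Special case α_H = id: an H-colinear coalgebra endomorphism of a comodule coalgebra
deforms it into an H-comodule Hom-coalgebra. -/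
theorem stmt_5 {F : Type*} [Field F] {H C : Type*}
    [AddCommGroup H] [Module F H] [AddCommGroup C] [Module F C]
    (μH : H ⊗[F] H →ₗ[F] H) (ΔH : H →ₗ[F] H ⊗[F] H)
    (ΔC : C →ₗ[F] C ⊗[F] C) (δ : C →ₗ[F] H ⊗[F] C)
    (αC : C →ₗ[F] C)
    -- H is a bialgebra
    (hassoc : μH ∘ₗ LinearMap.lTensor H μH ∘ₗ (TensorProduct.assoc F H H H).toLinearMap =
      μH ∘ₗ LinearMap.rTensor H μH)
    (hcoassoc : LinearMap.lTensor H ΔH ∘ₗ ΔH =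
      (TensorProduct.assoc F H H H).toLinearMap ∘ₗ LinearMap.rTensor H ΔH ∘ₗ ΔH)
    (hbi : ΔH ∘ₗ μH = TensorProduct.map μH μH ∘ₗ
      (TensorProduct.tensorTensorTensorComm F H H H H).toLinearMap ∘ₗ
      TensorProduct.map ΔH ΔH)
    -- C is a coassociative coalgebra
    (hCcoassoc : LinearMap.lTensor C ΔC ∘ₗ ΔC =
      (TensorProduct.assoc F C C C).toLinearMap ∘ₗ LinearMap.rTensor C ΔC ∘ₗ ΔC)
    -- δ is a (classical) H-comodule structure on C
    (hδ : LinearMap.lTensor H δ ∘ₗ δ =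
      (TensorProduct.assoc F H H C).toLinearMap ∘ₗ LinearMap.rTensor C ΔH ∘ₗ δ)
    -- the comodule coalgebra axiom
    (hcc : LinearMap.lTensor H ΔC ∘ₗ δ =
      (TensorProduct.map μH LinearMap.id ∘ₗ
        (TensorProduct.tensorTensorTensorComm F H C H C).toLinearMap ∘ₗ
        TensorProduct.map δ δ) ∘ₗ ΔC)
    -- α_C is a coalgebra endomorphism
    (hαC : ΔC ∘ₗ αC = TensorProduct.map αC αC ∘ₗ ΔC)
    -- α_C is H-colinear
    (hcomp : δ ∘ₗ αC = LinearMap.lTensor H αC ∘ₗ δ) :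
    -- δ_α = (id_H ⊗ α_C) ∘ δ is an H-comodule structure on C_α ...
    (LinearMap.lTensor H αC ∘ₗ δ) ∘ₗ αC =
      TensorProduct.map LinearMap.id αC ∘ₗ (LinearMap.lTensor H αC ∘ₗ δ) ∧
    TensorProduct.map LinearMap.id (LinearMap.lTensor H αC ∘ₗ δ) ∘ₗ
        (LinearMap.lTensor H αC ∘ₗ δ) =
      (TensorProduct.assoc F H H C).toLinearMap ∘ₗ
        TensorProduct.map ΔH αC ∘ₗ (LinearMap.lTensor H αC ∘ₗ δ) ∧
    -- ... satisfying the comodule Hom-coalgebra axiom (with α_H = id)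
    TensorProduct.map LinearMap.id (ΔC ∘ₗ αC) ∘ₗ (LinearMap.lTensor H αC ∘ₗ δ) =
      (TensorProduct.map μH LinearMap.id ∘ₗ
        (TensorProduct.tensorTensorTensorComm F H C H C).toLinearMap ∘ₗ
        TensorProduct.map (LinearMap.lTensor H αC ∘ₗ δ) (LinearMap.lTensor H αC ∘ₗ δ)) ∘ₗ
        (ΔC ∘ₗ αC) := by
  have hδα : (LinearMap.lTensor H αC ∘ₗ δ) ∘ₗ αC =
      (LinearMap.lTensor H αC ∘ₗ LinearMap.lTensor H αC) ∘ₗ δ := by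
    show LinearMap.lTensor H αC ∘ₗ (δ ∘ₗ αC) = _
    rw [hcomp]
    simp only [LinearMap.comp_assoc]
  refine ⟨hδα.trans rfl, ?_, ?_⟩
  · -- second conjunct
    have h1 : TensorProduct.map ΔH αC ∘ₗ LinearMap.lTensor H αC =
        LinearMap.lTensor (H ⊗[F] H) (αC ∘ₗ αC) ∘ₗ LinearMap.rTensor C ΔH := by
      ext; simp
    have h2 : (TensorProduct.assoc F H H C).toLinearMap ∘ₗ
        LinearMap.lTensor (H ⊗[F] H) (αC ∘ₗ αC) =
        LinearMap.lTensor H (LinearMap.lTensor H αC ∘ₗ LinearMap.lTensor H αC) ∘ₗ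
          (TensorProduct.assoc F H H C).toLinearMap := by
      ext; simp
    have hL : TensorProduct.map LinearMap.id (LinearMap.lTensor H αC ∘ₗ δ) ∘ₗ
        (LinearMap.lTensor H αC ∘ₗ δ) =
        LinearMap.lTensor H (LinearMap.lTensor H αC ∘ₗ LinearMap.lTensor H αC) ∘ₗ
          (TensorProduct.assoc F H H C).toLinearMap ∘ₗ LinearMap.rTensor C ΔH ∘ₗ δ := by
      show (LinearMap.lTensor H (LinearMap.lTensor H αC ∘ₗ δ) ∘ₗ LinearMap.lTensor H αC) ∘ₗ δ
        = _
      rw [← LinearMap.lTensor_comp, hδα, LinearMap.lTensor_comp]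
      show LinearMap.lTensor H (LinearMap.lTensor H αC ∘ₗ LinearMap.lTensor H αC) ∘ₗ
        (LinearMap.lTensor H δ ∘ₗ δ) = _
      rw [hδ]
    have hR : (TensorProduct.assoc F H H C).toLinearMap ∘ₗ
        TensorProduct.map ΔH αC ∘ₗ (LinearMap.lTensor H αC ∘ₗ δ) =
        LinearMap.lTensor H (LinearMap.lTensor H αC ∘ₗ LinearMap.lTensor H αC) ∘ₗ
          (TensorProduct.assoc F H H C).toLinearMap ∘ₗ LinearMap.rTensor C ΔH ∘ₗ δ := by
      show (TensorProduct.assoc F H H C).toLinearMap ∘ₗ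
        (TensorProduct.map ΔH αC ∘ₗ LinearMap.lTensor H αC) ∘ₗ δ = _
      rw [h1]
      show ((TensorProduct.assoc F H H C).toLinearMap ∘ₗ
        LinearMap.lTensor (H ⊗[F] H) (αC ∘ₗ αC)) ∘ₗ LinearMap.rTensor C ΔH ∘ₗ δ = _
      rw [h2]
      simp only [LinearMap.comp_assoc]
    exact hL.trans hR.symm
  · -- third conjunct
    have hαα : (ΔC ∘ₗ αC) ∘ₗ αC = (TensorProduct.map αC αC ∘ₗ ΔC) ∘ₗ αC := by rw [hαC]
    have hsplit : TensorProduct.map (LinearMap.lTensor H αC ∘ₗ δ)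
        (LinearMap.lTensor H αC ∘ₗ δ) =
        TensorProduct.map (LinearMap.lTensor H αC) (LinearMap.lTensor H αC) ∘ₗ
          TensorProduct.map δ δ := by
      ext; simp
    have hkey : TensorProduct.map μH LinearMap.id ∘ₗ
        (TensorProduct.tensorTensorTensorComm F H C H C).toLinearMap ∘ₗ
        TensorProduct.map (LinearMap.lTensor H αC) (LinearMap.lTensor H αC) =
        LinearMap.lTensor H (TensorProduct.map αC αC) ∘ₗ
          TensorProduct.map μH LinearMap.id ∘ₗ
          (TensorProduct.tensorTensorTensorComm F H C H C).toLinearMap := by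
      ext; simp
    have hL : TensorProduct.map LinearMap.id (ΔC ∘ₗ αC) ∘ₗ
        (LinearMap.lTensor H αC ∘ₗ δ) =
        LinearMap.lTensor H (TensorProduct.map αC αC) ∘ₗ
          ((TensorProduct.map μH LinearMap.id ∘ₗ
            (TensorProduct.tensorTensorTensorComm F H C H C).toLinearMap ∘ₗ
            TensorProduct.map δ δ) ∘ₗ ΔC) ∘ₗ αC := by
      show (LinearMap.lTensor H (ΔC ∘ₗ αC) ∘ₗ LinearMap.lTensor H αC) ∘ₗ δ = _
      rw [← LinearMap.lTensor_comp, hαα, LinearMap.lTensor_comp, LinearMap.lTensor_comp]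
      show LinearMap.lTensor H (TensorProduct.map αC αC) ∘ₗ
        LinearMap.lTensor H ΔC ∘ₗ (LinearMap.lTensor H αC ∘ₗ δ) = _
      rw [← hcomp]
      show LinearMap.lTensor H (TensorProduct.map αC αC) ∘ₗ
        (LinearMap.lTensor H ΔC ∘ₗ δ) ∘ₗ αC = _
      rw [hcc]
    have hR : (TensorProduct.map μH LinearMap.id ∘ₗ
        (TensorProduct.tensorTensorTensorComm F H C H C).toLinearMap ∘ₗ
        TensorProduct.map (LinearMap.lTensor H αC ∘ₗ δ) (LinearMap.lTensor H αC ∘ₗ δ)) ∘ₗ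
        (ΔC ∘ₗ αC) =
        LinearMap.lTensor H (TensorProduct.map αC αC) ∘ₗ
          ((TensorProduct.map μH LinearMap.id ∘ₗ
            (TensorProduct.tensorTensorTensorComm F H C H C).toLinearMap ∘ₗ
            TensorProduct.map δ δ) ∘ₗ ΔC) ∘ₗ αC := by
      rw [hsplit]
      show ((TensorProduct.map μH LinearMap.id ∘ₗ
        (TensorProduct.tensorTensorTensorComm F H C H C).toLinearMap ∘ₗ
        TensorProduct.map (LinearMap.lTensor H αC) (LinearMap.lTensor H αC)) ∘ₗ
        TensorProduct.map δ δ) ∘ₗ ΔC ∘ₗ αC = _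
      rw [hkey]
      simp only [LinearMap.comp_assoc]
    exact hL.trans hR.symm
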